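/- Let k ≥ 1, let U be a nonempty cone in ℝ^k, and let α and β be nondecreasing functions on [0,∞). Let f be an entire function on ℂ^k such that ‖f‖_{W,A,B} < ∞ for some A, B > 0 and some conic neighborhood W of U. Then for every ζ ∈ ℂ^k, the translated function z ↦ f(z+ζ) satisfies ‖f(·+ζ)‖_{W,A',B'} < ∞ for some A', B' > 0 (with the same conic neighborhood W). In particular, if f belongs to E^β_α(U), then so does f(·+ζ). -/

import Mathlib

open MeasureTheory Set Filter
open scoped ENNReal

noncomputable section

/-- `ℝ^k` with the uniform (sup) norm. -/
abbrev RV (k : ℕ) := Fin k → ℝ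
/-- `ℂ^k` with the uniform (sup) norm. -/
abbrev CV (k : ℕ) := Fin k → ℂ

/-- Real part of a point of `ℂ^k`. -/
def reP {k : ℕ} (z : CV k) : RV k := fun j => (z j).re
/-- Imaginary part of a point of `ℂ^k`. -/
def imP {k : ℕ} (z : CV k) : RV k := fun j => (z j).im

/-- A (nonempty) cone in `ℝ^k`. -/
def IsConeSet {k : ℕ} (U : Set (RV k)) : Prop :=
  U.Nonempty ∧ ∀ x ∈ U, ∀ t : ℝ, 0 < t → t • x ∈ U

/-- `W` is a conic neighborhood of the cone `U`: `W` is a cone containing `U`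
whose projection to the unit sphere is open. -/
def ConicNbhd {k : ℕ} (W U : Set (RV k)) : Prop :=
  IsConeSet W ∧ U ⊆ W ∧
    IsOpen {p : Metric.sphere (0 : RV k) 1 |
      ∃ x ∈ W, x ≠ 0 ∧ ‖x‖⁻¹ • x = (p : RV k)}

/-- The weight function `ρ_{U,A,B}(x+iy) = -α(|x|/A) + β(B|y|) + β(B δ_U(x))`. -/
def rhoW {k : ℕ} (α β : ℝ → ℝ) (U : Set (RV k)) (A B : ℝ) (z : CV k) : ℝ :=
  -α (‖reP z‖ / A) + β (B * ‖imP z‖) + β (B * Metric.infDist (reP z) U)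

/-- `‖f‖_{U,A,B} = sup_z |f(z)| e^{-ρ_{U,A,B}(z)}`, as a value in `ℝ≥0∞`. -/
def supNorm {k : ℕ} (α β : ℝ → ℝ) (U : Set (RV k)) (A B : ℝ) (f : CV k → ℂ) : ℝ≥0∞ :=
  ⨆ z : CV k, ENNReal.ofReal (‖f z‖ * Real.exp (-(rhoW α β U A B z)))

/-- `‖f‖'_{U,A,B} = (∫ |f(z)|² e^{-2ρ_{U,A,B}(z)} dλ(z))^{1/2}`, as a value in `ℝ≥0∞`. -/
def l2Norm {k : ℕ} (α β : ℝ → ℝ) (U : Set (RV k)) (A B : ℝ) (f : CV k → ℂ) : ℝ≥0∞ :=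
  (∫⁻ z : CV k, ENNReal.ofReal (‖f z‖ ^ 2 * Real.exp (-(2 * rhoW α β U A B z)))) ^ (1/2 : ℝ)

/-- The standing assumptions on the indicator functions `α`, `β`:
unbounded, continuous, (strictly) monotonically increasing on `[0,∞)`, `β` convex,
and `α(s)/s^κ` nondecreasing for large `s` for some `κ > 0`. -/
structure GoodPair (α β : ℝ → ℝ) : Prop where
  alpha_cont : ContinuousOn α (Ici 0)
  alpha_mono : StrictMonoOn α (Ici 0)
  alpha_unbdd : ∀ M : ℝ, ∃ s : ℝ, 0 ≤ s ∧ M < α s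
  beta_cont : ContinuousOn β (Ici 0)
  beta_mono : StrictMonoOn β (Ici 0)
  beta_unbdd : ∀ M : ℝ, ∃ s : ℝ, 0 ≤ s ∧ M < β s
  beta_convex : ConvexOn ℝ (Ici 0) β
  kappa : ∃ κ : ℝ, 0 < κ ∧ ∃ s₀ : ℝ, 0 < s₀ ∧
    MonotoneOn (fun s : ℝ => α s / s ^ κ) (Ici s₀)

/-- Nontriviality of the space `E^β_α(ℝ^k)`. -/
def NontrivialE (k : ℕ) (α β : ℝ → ℝ) : Prop :=
  ∃ A₀ B₀ : ℝ, 0 < A₀ ∧ 0 < B₀ ∧ ∃ f₀ : CV k → ℂ,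
    Differentiable ℂ f₀ ∧ f₀ ≠ 0 ∧ supNorm α β Set.univ A₀ B₀ f₀ < ⊤

/-- Plurisubharmonic: upper semicontinuous and satisfying the sub-mean-value
property on every complex line. -/
def Plurisubharmonic {k : ℕ} (ρ : CV k → ℝ) : Prop :=
  UpperSemicontinuous ρ ∧ ∀ z w : CV k,
    ρ z ≤ (1 / (2 * Real.pi)) *
      ∫ θ in (0:ℝ)..(2 * Real.pi), ρ (z + Complex.exp (θ * Complex.I) • w)

/-- `f` belongs to `V(ℝ^k)`: entire with `‖f‖_{ℝ^k,A,B} < ∞` for some `A, B > 0`. -/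
def MemV0 {k : ℕ} (α β : ℝ → ℝ) (f : CV k → ℂ) : Prop :=
  Differentiable ℂ f ∧ ∃ A B : ℝ, 0 < A ∧ 0 < B ∧ supNorm α β Set.univ A B f < ⊤

/-- `f` belongs to `V(K)`: entire with `‖f‖_{W,A,B} < ∞` for some `A, B > 0`
and some conic neighborhood `W` of `K`. -/
def MemVK {k : ℕ} (α β : ℝ → ℝ) (K : Set (RV k)) (f : CV k → ℂ) : Prop :=
  Differentiable ℂ f ∧ ∃ A B : ℝ, 0 < A ∧ 0 < B ∧
    ∃ W : Set (RV k), ConicNbhd W K ∧ supNorm α β W A B f < ⊤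

/-- `u` is linear on the subspace cut out by `P`. -/
def LinearOnP {k : ℕ} (P : (CV k → ℂ) → Prop) (u : (CV k → ℂ) → ℂ) : Prop :=
  (∀ f g : CV k → ℂ, P f → P g → u (f + g) = u f + u g) ∧
  (∀ (c : ℂ) (f : CV k → ℂ), P f → u (c • f) = c * u f)

/-- Continuity of a linear functional on `V(ℝ^k)`. -/
def ContV0 {k : ℕ} (α β : ℝ → ℝ) (u : (CV k → ℂ) → ℂ) : Prop :=
  ∀ A B : ℝ, 0 < A → 0 < B → ∃ C : ℝ, 0 < C ∧ ∀ f : CV k → ℂ, MemV0 α β f →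
    supNorm α β Set.univ A B f < ⊤ → ‖u f‖ ≤ C * (supNorm α β Set.univ A B f).toReal

/-- Continuity of a linear functional on `V(K)`. -/
def ContVK {k : ℕ} (α β : ℝ → ℝ) (K : Set (RV k)) (v : (CV k → ℂ) → ℂ) : Prop :=
  ∀ A B : ℝ, 0 < A → 0 < B → ∀ W : Set (RV k), ConicNbhd W K →
    ∃ C : ℝ, 0 < C ∧ ∀ f : CV k → ℂ, MemVK α β K f →
      supNorm α β W A B f < ⊤ → ‖v f‖ ≤ C * (supNorm α β W A B f).toReal

/-- The closed cone `K` is a carrier cone of `u`: `u` extends to a continuous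
linear functional on `V(K)`. -/
def CarrierCone {k : ℕ} (α β : ℝ → ℝ) (u : (CV k → ℂ) → ℂ) (K : Set (RV k)) : Prop :=
  IsClosed K ∧ IsConeSet K ∧ ∃ v : (CV k → ℂ) → ℂ,
    (∀ f : CV k → ℂ, MemV0 α β f → v f = u f) ∧
    LinearOnP (MemVK α β K) v ∧ ContVK α β K v



lemma alpha_step {α : ℝ → ℝ} (hαm : MonotoneOn α (Ici 0)) {A s t r : ℝ} (hA : 0 < A)
    (hs : 0 ≤ s) (ht : 0 ≤ t) (hr : 0 ≤ r) (h : t ≤ s + r) :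
    α (t / (2 * A)) ≤ α (s / A) + α (r / A) - α 0 := by
  rcases le_total t (2 * r) with h1 | h1
  · have h2 : α (t / (2 * A)) ≤ α (r / A) := by
      apply hαm (mem_Ici.mpr (by positivity)) (mem_Ici.mpr (by positivity))
      rw [div_le_div_iff₀ (by positivity) hA]; nlinarith
    have h3 : α 0 ≤ α (s / A) := hαm (mem_Ici.mpr le_rfl) (mem_Ici.mpr (by positivity)) (by positivity)
    linarith
  · have h2 : α (t / (2 * A)) ≤ α (s / A) := by
      apply hαm (mem_Ici.mpr (by positivity)) (mem_Ici.mpr (by positivity))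
      rw [div_le_div_iff₀ (by positivity) hA]; nlinarith
    have h3 : α 0 ≤ α (r / A) := hαm (mem_Ici.mpr le_rfl) (mem_Ici.mpr (by positivity)) (by positivity)
    linarith

lemma beta_step {β : ℝ → ℝ} (hβm : MonotoneOn β (Ici 0)) {B s t c : ℝ} (hB : 0 < B)
    (hs : 0 ≤ s) (ht : 0 ≤ t) (hc : 0 ≤ c) (h : s ≤ t + c) :
    β (B * s) ≤ β (2 * B * t) + β (2 * B * c) - β 0 := by
  rcases le_total t c with h1 | h1
  · have h2 : β (B * s) ≤ β (2 * B * c) := hβm (mem_Ici.mpr (by positivity)) (mem_Ici.mpr (by positivity)) (by nlinarith)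
    have h3 : β 0 ≤ β (2 * B * t) := hβm (mem_Ici.mpr le_rfl) (mem_Ici.mpr (by positivity)) (by positivity)
    linarith
  · have h2 : β (B * s) ≤ β (2 * B * t) := hβm (mem_Ici.mpr (by positivity)) (mem_Ici.mpr (by positivity)) (by nlinarith)
    have h3 : β 0 ≤ β (2 * B * c) := hβm (mem_Ici.mpr le_rfl) (mem_Ici.mpr (by positivity)) (by positivity)
    linarith

/-- stability of `E^β_α(U)` under translations. -/
theorem translation_stability {k : ℕ} (hk : 1 ≤ k) (U : Set (RV k)) (hU : IsConeSet U)
    (α β : ℝ → ℝ) (hαm : MonotoneOn α (Ici 0)) (hβm : MonotoneOn β (Ici 0))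
    (f : CV k → ℂ) (hf : Differentiable ℂ f)
    (A B : ℝ) (hA : 0 < A) (hB : 0 < B) (W : Set (RV k)) (hW : ConicNbhd W U)
    (hfn : supNorm α β W A B f < ⊤) (ζ : CV k) :
    ∃ A' B' : ℝ, 0 < A' ∧ 0 < B' ∧
      supNorm α β W A' B' (fun z => f (z + ζ)) < ⊤ := by

  refine ⟨2 * A, 2 * B, by linarith, by linarith, ?_⟩
  set a : RV k := reP ζ with ha
  set b : RV k := imP ζ with hb
  set S : ℝ := (supNorm α β W A B f).toReal with hS
  have hS0 : 0 ≤ S := ENNReal.toReal_nonneg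
  -- pointwise bound on f
  have hfb : ∀ w : CV k, ‖f w‖ ≤ S * Real.exp (rhoW α β W A B w) := by
    intro w
    have h1 : ENNReal.ofReal (‖f w‖ * Real.exp (-(rhoW α β W A B w))) ≤ supNorm α β W A B f :=
      le_iSup (fun z => ENNReal.ofReal (‖f z‖ * Real.exp (-(rhoW α β W A B z)))) w
    have h2 : ‖f w‖ * Real.exp (-(rhoW α β W A B w)) ≤ S := by
      rw [hS]
      exact (ENNReal.ofReal_le_iff_le_toReal hfn.ne).mp h1
    have h3 : (0:ℝ) < Real.exp (-(rhoW α β W A B w)) := Real.exp_pos _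
    calc ‖f w‖ = (‖f w‖ * Real.exp (-(rhoW α β W A B w))) * Real.exp (rhoW α β W A B w) := by
          rw [mul_assoc, ← Real.exp_add]; simp
      _ ≤ S * Real.exp (rhoW α β W A B w) := by
          apply mul_le_mul_of_nonneg_right h2 (Real.exp_pos _).le
  set c : ℝ := (α (‖a‖ / A) - α 0) + (β (2 * B * ‖b‖) - β 0) + (β (2 * B * ‖a‖) - β 0) with hc
  -- weight comparison
  have hrho : ∀ z : CV k, rhoW α β W A B (z + ζ) ≤ rhoW α β W (2 * A) (2 * B) z + c := by
    intro z
    have hre : reP (z + ζ) = reP z + a := funext fun j => Complex.add_re _ _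
    have him : imP (z + ζ) = imP z + b := funext fun j => Complex.add_im _ _
    set x : RV k := reP z
    set y : RV k := imP z
    have hxa : ‖x‖ ≤ ‖x + a‖ + ‖a‖ := by
      calc ‖x‖ = ‖(x + a) + (-a)‖ := by ring_nf
        _ ≤ ‖x + a‖ + ‖-a‖ := norm_add_le _ _
        _ = ‖x + a‖ + ‖a‖ := by rw [norm_neg]
    have hyb : ‖y + b‖ ≤ ‖y‖ + ‖b‖ := norm_add_le _ _
    have hdist : Metric.infDist (x + a) W ≤ Metric.infDist x W + ‖a‖ := by
      have := Metric.infDist_le_infDist_add_dist (x := x + a) (y := x) (s := W)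
      simpa [dist_eq_norm] using this
    have e1 : α (‖x‖ / (2 * A)) ≤ α (‖x + a‖ / A) + α (‖a‖ / A) - α 0 :=
      alpha_step hαm hA (norm_nonneg _) (norm_nonneg _) (norm_nonneg _) hxa
    have e2 : β (B * ‖y + b‖) ≤ β (2 * B * ‖y‖) + β (2 * B * ‖b‖) - β 0 :=
      beta_step hβm hB (norm_nonneg _) (norm_nonneg _) (norm_nonneg _) hyb
    have e3 : β (B * Metric.infDist (x + a) W) ≤
        β (2 * B * Metric.infDist x W) + β (2 * B * ‖a‖) - β 0 :=
      beta_step hβm hB Metric.infDist_nonneg Metric.infDist_nonneg (norm_nonneg _) hdist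
    simp only [rhoW, hre, him, hc]
    linarith
  -- conclude
  have hbound : supNorm α β W (2 * A) (2 * B) (fun z => f (z + ζ)) ≤
      ENNReal.ofReal (S * Real.exp c) := by
    apply iSup_le
    intro z
    apply ENNReal.ofReal_le_ofReal
    have h1 : ‖f (z + ζ)‖ ≤ S * Real.exp (rhoW α β W A B (z + ζ)) := hfb _
    have h2 := hrho z
    calc ‖f (z + ζ)‖ * Real.exp (-(rhoW α β W (2 * A) (2 * B) z))
        ≤ (S * Real.exp (rhoW α β W A B (z + ζ))) * Real.exp (-(rhoW α β W (2 * A) (2 * B) z)) :=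
          mul_le_mul_of_nonneg_right h1 (Real.exp_pos _).le
      _ = S * Real.exp (rhoW α β W A B (z + ζ) - rhoW α β W (2 * A) (2 * B) z) := by
          rw [mul_assoc, ← Real.exp_add]; ring_nf
      _ ≤ S * Real.exp c := by
          apply mul_le_mul_of_nonneg_left _ hS0
          exact Real.exp_le_exp.mpr (by linarith)
  exact lt_of_le_of_lt hbound ENNReal.ofReal_lt_top


end
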